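/- For a submodular function F on ground set V and permutation σ ordering V such that the first |X| elements are exactly X, the modular function m defined by m(σ(i)) = F(S_i) - F(S_{i-1}) is a lower bound: m(Y) ≤ F(Y) for all Y ⊆ V. -/

import Mathlib

open Finset

def Submodular {V : Type*} [DecidableEq V] (F : Finset V → ℝ) : Prop :=
  ∀ A B : Finset V, ∀ v : V, A ⊆ B → v ∉ B →
    F (insert v B) - F B ≤ F (insert v A) - F A

/-- `prefixSet σ k` is the set `S_k = {σ(0), …, σ(k-1)}`. -/
def prefixSet {V : Type*} [Fintype V] [DecidableEq V]
    (σ : Fin (Fintype.card V) ≃ V) (k : ℕ) : Finset V :=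
  (Finset.univ.filter (fun i : Fin (Fintype.card V) => (i : ℕ) < k)).image σ

lemma mem_prefixSet {V : Type*} [Fintype V] [DecidableEq V]
    (σ : Fin (Fintype.card V) ≃ V) (k : ℕ) (v : V) :
    v ∈ prefixSet σ k ↔ (σ.symm v : ℕ) < k := by
  simp only [prefixSet, Finset.mem_image, Finset.mem_filter, Finset.mem_univ, true_and]
  constructor
  · rintro ⟨i, hi, rfl⟩; simpa using hi
  · intro h; exact ⟨σ.symm v, h, by simp⟩

/-- The subgradient modular function is a lower bound on `F`. -/
theorem modular_is_lower_bound
    {V : Type*} [Fintype V] [DecidableEq V]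
    (F : Finset V → ℝ) (hsub : Submodular F) (h0 : F ∅ = 0)
    (X : Finset V) (σ : Fin (Fintype.card V) ≃ V)
    (hσ : ∀ i : Fin (Fintype.card V), σ i ∈ X ↔ (i : ℕ) < X.card) :
    ∀ Y : Finset V,
      ∑ v ∈ Y, (F (prefixSet σ ((σ.symm v : ℕ) + 1)) - F (prefixSet σ (σ.symm v : ℕ)))
        ≤ F Y := by
  intro Y
  have key : ∀ k, k ≤ Fintype.card V →
      ∑ v ∈ Y.filter (fun v => (σ.symm v : ℕ) < k),
        (F (prefixSet σ ((σ.symm v : ℕ) + 1)) - F (prefixSet σ (σ.symm v : ℕ)))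
      ≤ F (Y.filter (fun v => (σ.symm v : ℕ) < k)) := by
    intro k
    induction k with
    | zero =>
      intro _
      have : Y.filter (fun v => (σ.symm v : ℕ) < 0) = ∅ := by
        ext v; simp
      simp [this, h0]
    | succ k ih =>
      intro hk
      have hk' : k < Fintype.card V := Nat.lt_of_succ_le hk
      have ih' := ih (le_of_lt hk')
      set j : Fin (Fintype.card V) := ⟨k, hk'⟩ with hj
      have hjk : (σ.symm (σ j) : ℕ) = k := by simp [hj]
      have heqv : ∀ v : V, (σ.symm v : ℕ) = k ↔ v = σ j := by
        intro v
        constructor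
        · intro h
          have : σ.symm v = j := Fin.ext (by simpa [hj] using h)
          simpa using congrArg σ this
        · rintro rfl; exact hjk
      by_cases hmem : σ j ∈ Y
      · have hsplit : Y.filter (fun v => (σ.symm v : ℕ) < k+1) =
            insert (σ j) (Y.filter (fun v => (σ.symm v : ℕ) < k)) := by
          ext v
          simp only [Finset.mem_insert, Finset.mem_filter, Nat.lt_succ_iff_lt_or_eq]
          constructor
          · rintro ⟨hv, h | h⟩
            · exact Or.inr ⟨hv, h⟩
            · exact Or.inl ((heqv v).1 h)
          · rintro (rfl | ⟨hv, h⟩)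
            · exact ⟨hmem, Or.inr hjk⟩
            · exact ⟨hv, Or.inl h⟩
        have hnot : σ j ∉ Y.filter (fun v => (σ.symm v : ℕ) < k) := by
          simp [Finset.mem_filter, hjk, hj]
        rw [hsplit, Finset.sum_insert hnot]
        have hAB : Y.filter (fun v => (σ.symm v : ℕ) < k) ⊆ prefixSet σ k := by
          intro v hv
          rw [mem_prefixSet]
          exact (Finset.mem_filter.1 hv).2
        have hnotB : σ j ∉ prefixSet σ k := by
          rw [mem_prefixSet, hjk]; exact lt_irrefl k
        have hins : prefixSet σ (k+1) = insert (σ j) (prefixSet σ k) := by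
          ext v
          simp only [mem_prefixSet, Finset.mem_insert, Nat.lt_succ_iff_lt_or_eq]
          constructor
          · rintro (h | h)
            · exact Or.inr h
            · exact Or.inl ((heqv v).1 h)
          · rintro (rfl | h)
            · exact Or.inr hjk
            · exact Or.inl h
        have hstep := hsub (Y.filter (fun v => (σ.symm v : ℕ) < k)) (prefixSet σ k)
          (σ j) hAB hnotB
        rw [hjk, hins]
        linarith
      · have hsplit : Y.filter (fun v => (σ.symm v : ℕ) < k+1) =
            Y.filter (fun v => (σ.symm v : ℕ) < k) := by
          ext v
          simp only [Finset.mem_filter, Nat.lt_succ_iff_lt_or_eq]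
          constructor
          · rintro ⟨hv, h | h⟩
            · exact ⟨hv, h⟩
            · exact absurd hv (by rw [(heqv v).1 h]; exact hmem)
          · rintro ⟨hv, h⟩; exact ⟨hv, Or.inl h⟩
        rw [hsplit]; exact ih'
  have hall : Y.filter (fun v => (σ.symm v : ℕ) < Fintype.card V) = Y := by
    apply Finset.filter_true_of_mem
    intro v _; exact (σ.symm v).isLt
  have := key (Fintype.card V) le_rfl
  rwa [hall] at this
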